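/- Let 1 < p < ∞ and let ω satisfy the dyadic reverse Carleson condition of order min{1, 2/p} with constant C. Then for any two finite families Λ₁, Λ₂ of dyadic intervals with card(Λ₁) ≤ card(Λ₂), one has ‖∑_{I∈Λ₁} H_I/‖H_I‖_{p,ω}‖_{X^p(ω)} ≤ C²·‖∑_{I∈Λ₂} H_I/‖H_I‖_{p,ω}‖_{X^p(ω)}, i.e., the normalized Haar basis is democratic in X^p(ω) with constant C². -/

import Mathlib

open MeasureTheory Set

noncomputable def dyadicI (n k : ℕ) : Set ℝ := Set.Ico ((k : ℝ) / 2 ^ n) (((k : ℝ) + 1) / 2 ^ n)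

def IsDyadic (I : ℕ × ℕ) : Prop := I.2 < 2 ^ I.1

noncomputable def wInt (w : ℝ → ℝ) (I : ℕ × ℕ) : ℝ := ∫ x in dyadicI I.1 I.2, w x

def ancestors (J : ℕ × ℕ) : Set (ℕ × ℕ) :=
  {I | IsDyadic I ∧ dyadicI J.1 J.2 ⊆ dyadicI I.1 I.2}

lemma measurableSet_dyadicI (n k : ℕ) : MeasurableSet (dyadicI n k) := measurableSet_Ico

lemma dyadic_subset_unit {I : ℕ × ℕ} (hI : IsDyadic I) : dyadicI I.1 I.2 ⊆ Set.Ico (0:ℝ) 1 := by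
  have h2 : (0:ℝ) < 2 ^ I.1 := by positivity
  have hle : ((I.2:ℝ) + 1) ≤ 2 ^ I.1 := by
    have h : (I.2 + 1 : ℕ) ≤ 2 ^ I.1 := hI
    exact_mod_cast h
  apply Set.Ico_subset_Ico
  · positivity
  · rw [div_le_one h2]; exact hle

lemma dyadic_nested {n k n' k' : ℕ} {x : ℝ} (hnn : n ≤ n')
    (hx : x ∈ dyadicI n k) (hx' : x ∈ dyadicI n' k') : dyadicI n' k' ⊆ dyadicI n k := by
  obtain ⟨h1, h2⟩ := hx
  obtain ⟨h1', h2'⟩ := hx'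
  have h2n : (0:ℝ) < 2 ^ n := by positivity
  have h2n' : (0:ℝ) < 2 ^ n' := by positivity
  set m := n' - n with hm
  have hmn : n' = n + m := by omega
  have hsplit : (2:ℝ) ^ n' = 2 ^ n * 2 ^ m := by rw [hmn, pow_add]
  have key1 : k * 2 ^ m ≤ k' := by
    have h : (k:ℝ) / 2 ^ n < ((k':ℝ) + 1) / 2 ^ n' := lt_of_le_of_lt h1 h2'
    rw [div_lt_div_iff₀ h2n h2n'] at h
    rw [hsplit] at h
    have : (k:ℝ) * 2 ^ m < (k':ℝ) + 1 := by nlinarith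
    have : ((k * 2 ^ m : ℕ) : ℝ) < ((k' + 1 : ℕ) : ℝ) := by push_cast; linarith
    have := Nat.cast_lt.mp this
    omega
  have key2 : k' + 1 ≤ (k + 1) * 2 ^ m := by
    have h : (k':ℝ) / 2 ^ n' < ((k:ℝ) + 1) / 2 ^ n := lt_of_le_of_lt h1' h2
    rw [div_lt_div_iff₀ h2n' h2n] at h
    rw [hsplit] at h
    have : (k':ℝ) < ((k:ℝ) + 1) * 2 ^ m := by nlinarith
    have : ((k' : ℕ) : ℝ) < (((k + 1) * 2 ^ m : ℕ) : ℝ) := by push_cast; linarith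
    have := Nat.cast_lt.mp this
    omega
  apply Set.Ico_subset_Ico
  · rw [div_le_div_iff₀ h2n h2n', hsplit]
    have : ((k * 2 ^ m : ℕ) : ℝ) ≤ ((k' : ℕ) : ℝ) := by exact_mod_cast key1
    push_cast at this
    nlinarith
  · rw [div_le_div_iff₀ h2n' h2n, hsplit]
    have : ((k' + 1 : ℕ) : ℝ) ≤ (((k + 1) * 2 ^ m : ℕ) : ℝ) := by exact_mod_cast key2
    push_cast at this
    nlinarith

lemma ancestors_level {I J : ℕ × ℕ} (hJ : IsDyadic J) (h : I ∈ ancestors J) : I.1 ≤ J.1 := by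
  obtain ⟨hId, hsub⟩ := h
  have h2I : (0:ℝ) < 2 ^ I.1 := by positivity
  have h2J : (0:ℝ) < 2 ^ J.1 := by positivity
  have hne : ((J.2:ℝ)) / 2 ^ J.1 < ((J.2:ℝ) + 1) / 2 ^ J.1 := by
    rw [div_lt_div_iff₀ h2J h2J]; nlinarith
  rw [dyadicI, dyadicI, Set.Ico_subset_Ico_iff hne] at hsub
  obtain ⟨ha, hb⟩ := hsub
  have hlen : (1:ℝ) / 2 ^ J.1 ≤ 1 / 2 ^ I.1 := by
    have hb' : ((J.2:ℝ) + 1) / 2 ^ J.1 - (J.2:ℝ) / 2 ^ J.1 = 1 / 2 ^ J.1 := by ring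
    have ha' : ((I.2:ℝ) + 1) / 2 ^ I.1 - (I.2:ℝ) / 2 ^ I.1 = 1 / 2 ^ I.1 := by ring
    linarith
  have : (2:ℝ) ^ I.1 ≤ 2 ^ J.1 := by
    have h := (div_le_div_iff₀ h2J h2I).mp hlen; linarith
  have hnat : (2:ℕ) ^ I.1 ≤ 2 ^ J.1 := by exact_mod_cast this
  exact (Nat.pow_le_pow_iff_right (by norm_num)).mp hnat

lemma ancestors_finite (J : ℕ × ℕ) (hJ : IsDyadic J) : (ancestors J).Finite := by
  apply Set.Finite.subset (Finset.finite_toSet ((Finset.range (J.1+1)) ×ˢ (Finset.range (2 ^ J.1))))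
  intro I hI
  have h1 : I.1 ≤ J.1 := ancestors_level hJ hI
  have h2 : I.2 < 2 ^ I.1 := hI.1
  simp only [Finset.coe_product, Finset.coe_range, Set.mem_prod, Set.mem_Iio]
  constructor
  · omega
  · calc I.2 < 2 ^ I.1 := h2
      _ ≤ 2 ^ J.1 := Nat.pow_le_pow_right (by norm_num) h1

lemma integrableOn_dyadic {w : ℝ → ℝ} (hpos : ∀ I, IsDyadic I → 0 < wInt w I)
    {I : ℕ × ℕ} (hI : IsDyadic I) : IntegrableOn w (dyadicI I.1 I.2) := by
  by_contra h
  have := integral_undef h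
  rw [show (∫ x in dyadicI I.1 I.2, w x) = wInt w I from rfl] at this
  exact absurd this (hpos I hI).ne'

lemma wInt_mono {w : ℝ → ℝ} (hw : ∀ x, 0 ≤ w x) (hpos : ∀ I, IsDyadic I → 0 < wInt w I)
    {I J : ℕ × ℕ} (hI : IsDyadic I) (hsub : dyadicI J.1 J.2 ⊆ dyadicI I.1 I.2) :
    wInt w J ≤ wInt w I := by
  apply setIntegral_mono_set (integrableOn_dyadic hpos hI)
  · exact Filter.Eventually.of_forall hw
  · exact HasSubset.Subset.eventuallyLE hsub

lemma isDyadic_zero : IsDyadic (0, 0) := by simp [IsDyadic]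

lemma carleson_sum {w : ℝ → ℝ} {p C : ℝ}
    (hw : ∀ x, 0 ≤ w x) (hpos : ∀ I, IsDyadic I → 0 < wInt w I)
    (hDRCC : ∀ J, IsDyadic J →
      ∑' I : ancestors J, (wInt w I.1) ^ (-(min 1 (2 / p)))
        ≤ C * (wInt w J) ^ (-(min 1 (2 / p))))
    {β : ℝ} (hβ : min 1 (2 / p) ≤ β)
    {J : ℕ × ℕ} (hJ : IsDyadic J) {S : Finset (ℕ × ℕ)} (hS : ∀ I ∈ S, I ∈ ancestors J) :
    ∑ I ∈ S, wInt w I ^ (-β) ≤ C * wInt w J ^ (-β) := by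
  set μ0 := min 1 (2 / p) with hμ0
  have hJpos := hpos J hJ
  have hfin := ancestors_finite J hJ
  have key : ∑ I ∈ S, wInt w I ^ (-μ0) ≤ C * wInt w J ^ (-μ0) := by
    have htsum : ∑' I : ancestors J, (wInt w I.1) ^ (-μ0)
        = ∑ I ∈ hfin.toFinset, wInt w I ^ (-μ0) := by
      exact (tsum_subtype (ancestors J) (fun I => wInt w I ^ (-μ0))).trans
        ((tsum_eq_sum fun b hb =>
          Set.indicator_of_notMem (fun hmem => hb (hfin.mem_toFinset.2 hmem)) _).trans
          (Finset.sum_congr rfl fun i hi =>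
            Set.indicator_of_mem (hfin.mem_toFinset.1 hi) _))
    have hsub : S ⊆ hfin.toFinset := fun I hI => hfin.mem_toFinset.2 (hS I hI)
    calc ∑ I ∈ S, wInt w I ^ (-μ0)
        ≤ ∑ I ∈ hfin.toFinset, wInt w I ^ (-μ0) := by
          apply Finset.sum_le_sum_of_subset_of_nonneg hsub
          intro i hi _
          exact Real.rpow_nonneg (hpos i (hfin.mem_toFinset.1 hi).1).le _
      _ = ∑' I : ancestors J, (wInt w I.1) ^ (-μ0) := htsum.symm
      _ ≤ C * wInt w J ^ (-μ0) := hDRCC J hJ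
  have step1 : ∀ I ∈ S, wInt w I ^ (-β) ≤ wInt w I ^ (-μ0) * wInt w J ^ (μ0 - β) := by
    intro I hI
    obtain ⟨hId, hsub⟩ := hS I hI
    have hIpos := hpos I hId
    have hle : wInt w J ≤ wInt w I := wInt_mono hw hpos hId hsub
    have hsplit : wInt w I ^ (-β) = wInt w I ^ (-μ0) * wInt w I ^ (μ0 - β) := by
      rw [← Real.rpow_add hIpos]; ring_nf
    rw [hsplit]
    apply mul_le_mul_of_nonneg_left _ (Real.rpow_nonneg hIpos.le _)
    exact Real.rpow_le_rpow_of_nonpos hJpos hle (by linarith)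
  calc ∑ I ∈ S, wInt w I ^ (-β)
      ≤ ∑ I ∈ S, wInt w I ^ (-μ0) * wInt w J ^ (μ0 - β) := Finset.sum_le_sum step1
    _ = (∑ I ∈ S, wInt w I ^ (-μ0)) * wInt w J ^ (μ0 - β) := (Finset.sum_mul _ _ _).symm
    _ ≤ (C * wInt w J ^ (-μ0)) * wInt w J ^ (μ0 - β) :=
        mul_le_mul_of_nonneg_right key (Real.rpow_nonneg hJpos.le _)
    _ = C * wInt w J ^ (-β) := by
        rw [mul_assoc, ← Real.rpow_add hJpos]; ring_nf

lemma C_ge_one {w : ℝ → ℝ} {p C : ℝ}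
    (hw : ∀ x, 0 ≤ w x) (hpos : ∀ I, IsDyadic I → 0 < wInt w I)
    (hDRCC : ∀ J, IsDyadic J →
      ∑' I : ancestors J, (wInt w I.1) ^ (-(min 1 (2 / p)))
        ≤ C * (wInt w J) ^ (-(min 1 (2 / p)))) : 1 ≤ C := by
  have h := carleson_sum (p := p) hw hpos hDRCC le_rfl isDyadic_zero
    (S := {(0, 0)}) (by intro I hI; rw [Finset.mem_singleton] at hI; subst hI; exact ⟨isDyadic_zero, subset_rfl⟩)
  simp only [Finset.sum_singleton] at h
  have hpow : 0 < wInt w (0, 0) ^ (-(min 1 (2 / p))) :=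
    Real.rpow_pos_of_pos (hpos _ isDyadic_zero) _
  nlinarith

noncomputable def Ffun (w : ℝ → ℝ) (p : ℝ) (Λ : Finset (ℕ × ℕ)) (x : ℝ) : ℝ :=
  ∑ I ∈ Λ, Set.indicator (dyadicI I.1 I.2) (fun _ => (wInt w I) ^ (-(2 / p))) x

noncomputable def Gfun (w : ℝ → ℝ) (Λ : Finset (ℕ × ℕ)) (x : ℝ) : ℝ :=
  ∑ I ∈ Λ, Set.indicator (dyadicI I.1 I.2) (fun _ => (wInt w I) ^ (-(1:ℝ))) x

lemma Ffun_nonneg {w : ℝ → ℝ} {p : ℝ} (hpos : ∀ I, IsDyadic I → 0 < wInt w I)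
    {Λ : Finset (ℕ × ℕ)} (hΛ : ∀ I ∈ Λ, IsDyadic I) (x : ℝ) : 0 ≤ Ffun w p Λ x :=
  Finset.sum_nonneg fun I hI =>
    Set.indicator_nonneg (fun _ _ => Real.rpow_nonneg (hpos I (hΛ I hI)).le _) x

lemma pointwise_bounds {w : ℝ → ℝ} {p C : ℝ} (hp : 1 < p) (hC : 0 < C)
    (hw : ∀ x, 0 ≤ w x) (hpos : ∀ I, IsDyadic I → 0 < wInt w I)
    (hDRCC : ∀ J, IsDyadic J →
      ∑' I : ancestors J, (wInt w I.1) ^ (-(min 1 (2 / p)))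
        ≤ C * (wInt w J) ^ (-(min 1 (2 / p))))
    {Λ : Finset (ℕ × ℕ)} (hΛ : ∀ I ∈ Λ, IsDyadic I) (x : ℝ) :
    Ffun w p Λ x ^ (p / 2) ≤ C ^ (p / 2) * Gfun w Λ x ∧
      Gfun w Λ x ≤ C * Ffun w p Λ x ^ (p / 2) := by
  classical
  have hp0 : 0 < p := lt_trans one_pos hp
  set T := Λ.filter (fun I => x ∈ dyadicI I.1 I.2) with hT
  have hFx : Ffun w p Λ x = ∑ I ∈ T, wInt w I ^ (-(2 / p)) := by
    rw [hT, Finset.sum_filter]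
    exact Finset.sum_congr rfl fun I _ => Set.indicator_apply _ _ _
  have hGx : Gfun w Λ x = ∑ I ∈ T, wInt w I ^ (-(1:ℝ)) := by
    rw [hT, Finset.sum_filter]
    exact Finset.sum_congr rfl fun I _ => Set.indicator_apply _ _ _
  by_cases hne : T.Nonempty
  · obtain ⟨J, hJT, hmax⟩ := T.exists_max_image (fun I => I.1) hne
    have hJmem := Finset.mem_filter.1 hJT
    have hJΛ : J ∈ Λ := hJmem.1
    have hxJ : x ∈ dyadicI J.1 J.2 := hJmem.2
    have hJd : IsDyadic J := hΛ J hJΛ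
    have hanc : ∀ I ∈ T, I ∈ ancestors J := by
      intro I hI
      have hImem := Finset.mem_filter.1 hI
      exact ⟨hΛ I hImem.1, dyadic_nested (hmax I hI) hImem.2 hxJ⟩
    have hJpos := hpos J hJd
    have hT2 : ∀ I ∈ T, IsDyadic I := fun I hI => (hanc I hI).1
    have hq : (0:ℝ) < p / 2 := by positivity
    have hFnn : 0 ≤ Ffun w p Λ x := Ffun_nonneg hpos hΛ x
    have htermF : wInt w J ^ (-(2 / p)) ≤ Ffun w p Λ x := by
      rw [hFx]
      exact Finset.single_le_sum (fun i hi => Real.rpow_nonneg (hpos i (hT2 i hi)).le _) hJT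
    have htermG : wInt w J ^ (-(1:ℝ)) ≤ Gfun w Λ x := by
      rw [hGx]
      exact Finset.single_le_sum (fun i hi => Real.rpow_nonneg (hpos i (hT2 i hi)).le _) hJT
    have hpow : (wInt w J ^ (-(2 / p))) ^ (p / 2) = wInt w J ^ (-(1:ℝ)) := by
      rw [← Real.rpow_mul hJpos.le]
      congr 1
      field_simp
    constructor
    · have hFle : Ffun w p Λ x ≤ C * wInt w J ^ (-(2 / p)) := by
        rw [hFx]; exact carleson_sum hw hpos hDRCC (min_le_right _ _) hJd hanc
      calc Ffun w p Λ x ^ (p / 2) ≤ (C * wInt w J ^ (-(2 / p))) ^ (p / 2) :=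
            Real.rpow_le_rpow hFnn hFle hq.le
        _ = C ^ (p / 2) * (wInt w J ^ (-(2 / p))) ^ (p / 2) :=
            Real.mul_rpow hC.le (Real.rpow_nonneg hJpos.le _)
        _ = C ^ (p / 2) * wInt w J ^ (-(1:ℝ)) := by rw [hpow]
        _ ≤ C ^ (p / 2) * Gfun w Λ x :=
            mul_le_mul_of_nonneg_left htermG (Real.rpow_nonneg hC.le _)
    · have hGle : Gfun w Λ x ≤ C * wInt w J ^ (-(1:ℝ)) := by
        rw [hGx]; exact carleson_sum hw hpos hDRCC (min_le_left _ _) hJd hanc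
      calc Gfun w Λ x ≤ C * wInt w J ^ (-(1:ℝ)) := hGle
        _ = C * (wInt w J ^ (-(2 / p))) ^ (p / 2) := by rw [hpow]
        _ ≤ C * Ffun w p Λ x ^ (p / 2) :=
            mul_le_mul_of_nonneg_left
              (Real.rpow_le_rpow (Real.rpow_nonneg hJpos.le _) htermF hq.le) hC.le
  · rw [Finset.not_nonempty_iff_eq_empty] at hne
    rw [hFx, hGx, hne]
    simp [Real.zero_rpow (ne_of_gt (by positivity : (0:ℝ) < p / 2))]

lemma dyadicI_zero : dyadicI 0 0 = Set.Ico (0:ℝ) 1 := by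
  simp [dyadicI]

lemma integrableOn_unit {w : ℝ → ℝ} (hpos : ∀ I, IsDyadic I → 0 < wInt w I) :
    IntegrableOn w (Set.Ico (0:ℝ) 1) := by
  have := integrableOn_dyadic hpos isDyadic_zero
  rwa [dyadicI_zero] at this

lemma Gfun_mul_w {w : ℝ → ℝ} (Λ : Finset (ℕ × ℕ)) (x : ℝ) :
    Gfun w Λ x * w x
      = ∑ I ∈ Λ, Set.indicator (dyadicI I.1 I.2) (fun y => wInt w I ^ (-(1:ℝ)) * w y) x := by
  rw [Gfun, Finset.sum_mul]
  apply Finset.sum_congr rfl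
  intro I _
  by_cases hx : x ∈ dyadicI I.1 I.2
  · rw [Set.indicator_of_mem hx, Set.indicator_of_mem hx]
  · rw [Set.indicator_of_notMem hx, Set.indicator_of_notMem hx, zero_mul]

lemma Gfun_term_integrable {w : ℝ → ℝ} (hpos : ∀ I, IsDyadic I → 0 < wInt w I)
    {Λ : Finset (ℕ × ℕ)} (hΛ : ∀ I ∈ Λ, IsDyadic I) :
    ∀ I ∈ Λ, IntegrableOn
      (Set.indicator (dyadicI I.1 I.2) (fun y => wInt w I ^ (-(1:ℝ)) * w y)) (Set.Ico (0:ℝ) 1) := by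
  intro I _
  exact (( integrableOn_unit hpos).const_mul _).indicator (measurableSet_dyadicI _ _)

lemma Gfun_integrableOn {w : ℝ → ℝ} (hpos : ∀ I, IsDyadic I → 0 < wInt w I)
    {Λ : Finset (ℕ × ℕ)} (hΛ : ∀ I ∈ Λ, IsDyadic I) :
    IntegrableOn (fun x => Gfun w Λ x * w x) (Set.Ico (0:ℝ) 1) := by
  have h := integrable_finset_sum Λ (Gfun_term_integrable hpos hΛ)
  apply h.congr
  exact Filter.Eventually.of_forall fun x => (Gfun_mul_w Λ x).symm

lemma Gfun_integral {w : ℝ → ℝ} (hw : ∀ x, 0 ≤ w x) (hpos : ∀ I, IsDyadic I → 0 < wInt w I)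
    {Λ : Finset (ℕ × ℕ)} (hΛ : ∀ I ∈ Λ, IsDyadic I) :
    ∫ x in Set.Ico (0:ℝ) 1, Gfun w Λ x * w x = Λ.card := by
  rw [show (fun x => Gfun w Λ x * w x)
      = fun x => ∑ I ∈ Λ, Set.indicator (dyadicI I.1 I.2)
          (fun y => wInt w I ^ (-(1:ℝ)) * w y) x from funext (Gfun_mul_w Λ)]
  rw [integral_finset_sum Λ (Gfun_term_integrable hpos hΛ)]
  have hterm : ∀ I ∈ Λ, (∫ x in Set.Ico (0:ℝ) 1,
      Set.indicator (dyadicI I.1 I.2) (fun y => wInt w I ^ (-(1:ℝ)) * w y) x) = 1 := by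
    intro I hI
    rw [setIntegral_indicator (measurableSet_dyadicI _ _)]
    rw [Set.inter_eq_self_of_subset_right (dyadic_subset_unit (hΛ I hI))]
    rw [integral_const_mul]
    rw [show (∫ x in dyadicI I.1 I.2, w x) = wInt w I from rfl]
    rw [Real.rpow_neg_one]
    exact inv_mul_cancel₀ (hpos I (hΛ I hI)).ne'
  rw [Finset.sum_congr rfl hterm]
  simp

lemma Ffun_measurable (w : ℝ → ℝ) (p : ℝ) (Λ : Finset (ℕ × ℕ)) :
    Measurable (Ffun w p Λ) :=
  Finset.measurable_sum _ fun I _ =>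
    Measurable.indicator measurable_const (measurableSet_dyadicI _ _)

lemma Fq_integrableOn {w : ℝ → ℝ} {p C : ℝ} (hp : 1 < p) (hC : 0 < C)
    (hw : ∀ x, 0 ≤ w x) (hpos : ∀ I, IsDyadic I → 0 < wInt w I)
    (hDRCC : ∀ J, IsDyadic J →
      ∑' I : ancestors J, (wInt w I.1) ^ (-(min 1 (2 / p)))
        ≤ C * (wInt w J) ^ (-(min 1 (2 / p))))
    {Λ : Finset (ℕ × ℕ)} (hΛ : ∀ I ∈ Λ, IsDyadic I) :
    IntegrableOn (fun x => Ffun w p Λ x ^ (p / 2) * w x) (Set.Ico (0:ℝ) 1) := by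
  apply Integrable.mono' ((Gfun_integrableOn hpos hΛ).const_mul (C ^ (p / 2)))
  · exact (((Ffun_measurable w p Λ).pow_const (p / 2)).aestronglyMeasurable).mul
      (integrableOn_unit hpos).aestronglyMeasurable
  · apply Filter.Eventually.of_forall
    intro x
    rw [Real.norm_eq_abs, abs_of_nonneg
      (mul_nonneg (Real.rpow_nonneg (Ffun_nonneg hpos hΛ x) _) (hw x))]
    calc Ffun w p Λ x ^ (p / 2) * w x
        ≤ (C ^ (p / 2) * Gfun w Λ x) * w x :=
          mul_le_mul_of_nonneg_right (pointwise_bounds hp hC hw hpos hDRCC hΛ x).1 (hw x)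
      _ = C ^ (p / 2) * (Gfun w Λ x * w x) := by ring

lemma Fq_integral_upper {w : ℝ → ℝ} {p C : ℝ} (hp : 1 < p) (hC : 0 < C)
    (hw : ∀ x, 0 ≤ w x) (hpos : ∀ I, IsDyadic I → 0 < wInt w I)
    (hDRCC : ∀ J, IsDyadic J →
      ∑' I : ancestors J, (wInt w I.1) ^ (-(min 1 (2 / p)))
        ≤ C * (wInt w J) ^ (-(min 1 (2 / p))))
    {Λ : Finset (ℕ × ℕ)} (hΛ : ∀ I ∈ Λ, IsDyadic I) :
    (∫ x in Set.Ico (0:ℝ) 1, Ffun w p Λ x ^ (p / 2) * w x) ≤ C ^ (p / 2) * Λ.card := by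
  calc (∫ x in Set.Ico (0:ℝ) 1, Ffun w p Λ x ^ (p / 2) * w x)
      ≤ ∫ x in Set.Ico (0:ℝ) 1, C ^ (p / 2) * (Gfun w Λ x * w x) := by
        apply integral_mono (Fq_integrableOn hp hC hw hpos hDRCC hΛ)
          ((Gfun_integrableOn hpos hΛ).const_mul _)
        intro x
        calc Ffun w p Λ x ^ (p / 2) * w x
            ≤ (C ^ (p / 2) * Gfun w Λ x) * w x :=
              mul_le_mul_of_nonneg_right (pointwise_bounds hp hC hw hpos hDRCC hΛ x).1 (hw x)
          _ = C ^ (p / 2) * (Gfun w Λ x * w x) := by ring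
    _ = C ^ (p / 2) * ∫ x in Set.Ico (0:ℝ) 1, Gfun w Λ x * w x := integral_const_mul _ _
    _ = C ^ (p / 2) * Λ.card := by rw [Gfun_integral hw hpos hΛ]

lemma Fq_integral_lower {w : ℝ → ℝ} {p C : ℝ} (hp : 1 < p) (hC : 0 < C)
    (hw : ∀ x, 0 ≤ w x) (hpos : ∀ I, IsDyadic I → 0 < wInt w I)
    (hDRCC : ∀ J, IsDyadic J →
      ∑' I : ancestors J, (wInt w I.1) ^ (-(min 1 (2 / p)))
        ≤ C * (wInt w J) ^ (-(min 1 (2 / p))))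
    {Λ : Finset (ℕ × ℕ)} (hΛ : ∀ I ∈ Λ, IsDyadic I) :
    (Λ.card : ℝ) ≤ C * ∫ x in Set.Ico (0:ℝ) 1, Ffun w p Λ x ^ (p / 2) * w x := by
  calc (Λ.card : ℝ) = ∫ x in Set.Ico (0:ℝ) 1, Gfun w Λ x * w x :=
        (Gfun_integral hw hpos hΛ).symm
    _ ≤ ∫ x in Set.Ico (0:ℝ) 1, C * (Ffun w p Λ x ^ (p / 2) * w x) := by
        apply integral_mono (Gfun_integrableOn hpos hΛ)
          ((Fq_integrableOn hp hC hw hpos hDRCC hΛ).const_mul _)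
        intro x
        calc Gfun w Λ x * w x
            ≤ (C * Ffun w p Λ x ^ (p / 2)) * w x :=
              mul_le_mul_of_nonneg_right (pointwise_bounds hp hC hw hpos hDRCC hΛ x).2 (hw x)
          _ = C * (Ffun w p Λ x ^ (p / 2) * w x) := by ring
    _ = C * ∫ x in Set.Ico (0:ℝ) 1, Ffun w p Λ x ^ (p / 2) * w x := integral_const_mul _ _

noncomputable def XnormOne (w : ℝ → ℝ) (p : ℝ) (Λ : Finset (ℕ × ℕ)) : ℝ :=
  (∫ x in Set.Ico (0 : ℝ) 1,
      (∑ I ∈ Λ, Set.indicator (dyadicI I.1 I.2) (fun _ => (wInt w I) ^ (-(2 / p))) x) ^ (p / 2)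
        * w x) ^ (1 / p)

theorem stmt18 (w : ℝ → ℝ) (p C : ℝ) (hp : 1 < p) (hC : 0 < C)
    (hw : ∀ x, 0 ≤ w x) (hpos : ∀ I, IsDyadic I → 0 < wInt w I)
    -- dyadic reverse Carleson condition of order `min{1, 2/p}` with constant `C`
    (hDRCC : ∀ J, IsDyadic J →
      ∑' I : ancestors J, (wInt w I.1) ^ (-(min 1 (2 / p)))
        ≤ C * (wInt w J) ^ (-(min 1 (2 / p))))
    (Λ₁ Λ₂ : Finset (ℕ × ℕ)) (h1 : ∀ I ∈ Λ₁, IsDyadic I) (h2 : ∀ I ∈ Λ₂, IsDyadic I)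
    (hcard : Λ₁.card ≤ Λ₂.card) :
    XnormOne w p Λ₁ ≤ C ^ 2 * XnormOne w p Λ₂ := by
  have hp0 : 0 < p := lt_trans one_pos hp
  have hC1 : 1 ≤ C := C_ge_one hw hpos hDRCC
  set A := ∫ x in Set.Ico (0:ℝ) 1, Ffun w p Λ₁ x ^ (p / 2) * w x with hA
  set B := ∫ x in Set.Ico (0:ℝ) 1, Ffun w p Λ₂ x ^ (p / 2) * w x with hB
  have hAnn : 0 ≤ A :=
    setIntegral_nonneg measurableSet_Ico fun x _ =>
      mul_nonneg (Real.rpow_nonneg (Ffun_nonneg hpos h1 x) _) (hw x)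
  have hBnn : 0 ≤ B :=
    setIntegral_nonneg measurableSet_Ico fun x _ =>
      mul_nonneg (Real.rpow_nonneg (Ffun_nonneg hpos h2 x) _) (hw x)
  have hchain : A ≤ (C ^ (p / 2) * C) * B := by
    calc A ≤ C ^ (p / 2) * Λ₁.card := Fq_integral_upper hp hC hw hpos hDRCC h1
      _ ≤ C ^ (p / 2) * Λ₂.card := by
          apply mul_le_mul_of_nonneg_left _ (Real.rpow_nonneg hC.le _)
          exact_mod_cast hcard
      _ ≤ C ^ (p / 2) * (C * B) :=
          mul_le_mul_of_nonneg_left (Fq_integral_lower hp hC hw hpos hDRCC h2)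
            (Real.rpow_nonneg hC.le _)
      _ = (C ^ (p / 2) * C) * B := by ring
  have hXA : XnormOne w p Λ₁ = A ^ (1 / p) := rfl
  have hXB : XnormOne w p Λ₂ = B ^ (1 / p) := rfl
  rw [hXA, hXB]
  have hCC : C ^ (p / 2) * C = C ^ (p / 2 + 1) := by
    rw [Real.rpow_add hC, Real.rpow_one]
  calc A ^ (1 / p) ≤ ((C ^ (p / 2 + 1)) * B) ^ (1 / p) := by
        apply Real.rpow_le_rpow hAnn _ (by positivity)
        rw [← hCC]; exact hchain
    _ = (C ^ (p / 2 + 1)) ^ (1 / p) * B ^ (1 / p) :=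
        Real.mul_rpow (Real.rpow_nonneg hC.le _) hBnn
    _ = C ^ ((p / 2 + 1) * (1 / p)) * B ^ (1 / p) := by
        rw [← Real.rpow_mul hC.le]
    _ ≤ C ^ (2:ℝ) * B ^ (1 / p) := by
        apply mul_le_mul_of_nonneg_right _ (Real.rpow_nonneg hBnn _)
        apply Real.rpow_le_rpow_of_exponent_le hC1
        rw [mul_one_div, div_le_iff₀ hp0]
        nlinarith
    _ = C ^ 2 * B ^ (1 / p) := by
        norm_num [Real.rpow_natCast]
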